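/- Let d ≥ 1, let c : ℝ → ℝ^{d×d} with c(t) symmetric for all t, let A be a real d×d matrix, and let u : ℝ^{d+1} → ℝ be a C^2 function. Define v(t,y) = u(t, e^{tA} y). Then for all (t,y) ∈ ℝ × ℝ^d, ∂_t u(t, e^{tA}y) + Tr(c(t) D_x^2 u(t, e^{tA}y)) + ⟨A e^{tA} y, D_x u(t, e^{tA}y)⟩ = ∂_t v(t,y) + Tr(e^{-tA} c(t) e^{-tA^*} D_y^2 v(t,y)). -/

import Mathlib

open MeasureTheory ENNReal

/-- Time derivative `∂ₜ u` of `u : ℝ × ℝᵈ → ℝ` (time is the first coordinate). -/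
noncomputable def ptime {d : ℕ} (u : ℝ × (Fin d → ℝ) → ℝ) (z : ℝ × (Fin d → ℝ)) : ℝ :=
  deriv (fun s => u (s, z.2)) z.1

/-- Spatial partial derivative `∂_{xᵢ} u` of `u : ℝ × ℝᵈ → ℝ`. -/
noncomputable def pspace {d : ℕ} (i : Fin d) (u : ℝ × (Fin d → ℝ) → ℝ)
    (z : ℝ × (Fin d → ℝ)) : ℝ :=
  fderiv ℝ (fun y => u (z.1, y)) z.2 (Pi.single i 1)

/-- Second spatial partial derivative `∂²_{xᵢxⱼ} u` of `u : ℝ × ℝᵈ → ℝ`. -/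
noncomputable def pspace2 {d : ℕ} (i j : Fin d) (u : ℝ × (Fin d → ℝ) → ℝ) :
    ℝ × (Fin d → ℝ) → ℝ :=
  pspace i (pspace j u)

open Matrix

section Aux

variable {d : ℕ}

lemma aux_single_decomp (w : Fin d → ℝ) :
    ∑ l, w l • (Pi.single l 1 : Fin d → ℝ) = w := by
  ext j
  simp [Finset.sum_apply, Pi.single_apply]

lemma aux_clm_apply_sum (T : (Fin d → ℝ) →L[ℝ] ℝ) (w : Fin d → ℝ) :
    T w = ∑ l, w l * T (Pi.single l 1) := by
  conv_lhs => rw [← aux_single_decomp w]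
  rw [map_sum]
  simp [smul_eq_mul]

lemma aux_ptime_eq (u : ℝ × (Fin d → ℝ) → ℝ) (z : ℝ × (Fin d → ℝ))
    (hu : DifferentiableAt ℝ u z) :
    ptime u z = fderiv ℝ u z (1, 0) := by
  have h1 : HasDerivAt (fun s : ℝ => ((s, z.2) : ℝ × (Fin d → ℝ)))
      ((1 : ℝ), (0 : Fin d → ℝ)) z.1 :=
    (hasDerivAt_id z.1).prodMk (hasDerivAt_const z.1 z.2)
  have h2 : HasDerivAt (fun s : ℝ => u (s, z.2)) (fderiv ℝ u z (1, 0)) z.1 :=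
    hu.hasFDerivAt.comp_hasDerivAt z.1 h1
  exact h2.deriv

/-- CLM `x ↦ (z.1, x)`. -/
noncomputable def inCLM (_a : ℝ) : (Fin d → ℝ) →L[ℝ] ℝ × (Fin d → ℝ) :=
  (0 : (Fin d → ℝ) →L[ℝ] ℝ).prod (ContinuousLinearMap.id ℝ (Fin d → ℝ))

lemma aux_pspace_eq (i : Fin d) (u : ℝ × (Fin d → ℝ) → ℝ) (z : ℝ × (Fin d → ℝ))
    (hu : DifferentiableAt ℝ u z) :
    pspace i u z = fderiv ℝ u z (0, Pi.single i 1) := by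
  have h1 : HasFDerivAt (fun x : Fin d → ℝ => ((z.1, x) : ℝ × (Fin d → ℝ)))
      (inCLM z.1) z.2 :=
    (hasFDerivAt_const z.1 z.2).prodMk (hasFDerivAt_id z.2)
  have h2 : HasFDerivAt (fun x : Fin d → ℝ => u (z.1, x))
      ((fderiv ℝ u z).comp (inCLM z.1)) z.2 :=
    hu.hasFDerivAt.comp z.2 h1
  have h3 : fderiv ℝ (fun x : Fin d → ℝ => u (z.1, x)) z.2
      = (fderiv ℝ u z).comp (inCLM z.1) := h2.fderiv
  show fderiv ℝ (fun x : Fin d → ℝ => u (z.1, x)) z.2 (Pi.single i 1) = _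
  rw [h3]
  rfl

lemma aux_fderiv_snd (u : ℝ × (Fin d → ℝ) → ℝ) (z : ℝ × (Fin d → ℝ))
    (hu : DifferentiableAt ℝ u z) (w : Fin d → ℝ) :
    fderiv ℝ u z (0, w) = ∑ i, w i * pspace i u z := by
  have hw : ((0, w) : ℝ × (Fin d → ℝ))
      = ∑ i, w i • (((0 : ℝ), (Pi.single i 1 : Fin d → ℝ)) : ℝ × (Fin d → ℝ)) := by
    rw [Prod.ext_iff]
    constructor
    · rw [Prod.fst_sum]
      simp
    · rw [Prod.snd_sum]
      simp only [Prod.smul_mk, Prod.snd]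
      exact (aux_single_decomp w).symm
  rw [hw, map_sum]
  refine Finset.sum_congr rfl fun i _ => ?_
  rw [_root_.map_smul, smul_eq_mul, aux_pspace_eq i u z hu]

/-- CLM `x ↦ M *ᵥ x`. -/
noncomputable def mulVecCLM (M : Matrix (Fin d) (Fin d) ℝ) : (Fin d → ℝ) →L[ℝ] (Fin d → ℝ) :=
  LinearMap.toContinuousLinearMap M.mulVecLin

lemma mulVecCLM_apply (M : Matrix (Fin d) (Fin d) ℝ) (x : Fin d → ℝ) :
    mulVecCLM M x = M.mulVec x := rfl

lemma aux_spatial_fderiv (f : (Fin d → ℝ) → ℝ) (M : Matrix (Fin d) (Fin d) ℝ)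
    (x : Fin d → ℝ) (hf : DifferentiableAt ℝ f (M.mulVec x)) (w : Fin d → ℝ) :
    fderiv ℝ (fun y => f (M.mulVec y)) x w = fderiv ℝ f (M.mulVec x) (M.mulVec w) := by
  have h1 : HasFDerivAt (fun y : Fin d → ℝ => M.mulVec y) (mulVecCLM M) x :=
    (mulVecCLM M).hasFDerivAt
  have h2 : HasFDerivAt (fun y : Fin d → ℝ => f (M.mulVec y))
      ((fderiv ℝ f (M.mulVec x)).comp (mulVecCLM M)) x :=
    hf.hasFDerivAt.comp x h1
  rw [h2.fderiv]
  rfl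

lemma aux_exp_mulVec_hasDerivAt (A : Matrix (Fin d) (Fin d) ℝ) (y : Fin d → ℝ) (t : ℝ) :
    HasDerivAt (fun s : ℝ => (NormedSpace.exp (s • A)).mulVec y)
      ((A * NormedSpace.exp (t • A)).mulVec y) t := by
  letI : SeminormedRing (Matrix (Fin d) (Fin d) ℝ) := Matrix.linftyOpSemiNormedRing
  letI : NormedRing (Matrix (Fin d) (Fin d) ℝ) := Matrix.linftyOpNormedRing
  letI : NormedAlgebra ℝ (Matrix (Fin d) (Fin d) ℝ) := Matrix.linftyOpNormedAlgebra
  haveI : CompleteSpace (Matrix (Fin d) (Fin d) ℝ) := FiniteDimensional.complete ℝ _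
  have hexp : HasDerivAt (fun s : ℝ => NormedSpace.exp (s • A))
      (A * NormedSpace.exp (t • A)) t := hasDerivAt_exp_smul_const' A t
  let L : Matrix (Fin d) (Fin d) ℝ →ₗ[ℝ] (Fin d → ℝ) :=
    { toFun := fun B => B.mulVec y
      map_add' := fun B C => Matrix.add_mulVec B C y
      map_smul' := fun r B => by simp [Matrix.smul_mulVec] }
  exact (LinearMap.toContinuousLinearMap L).hasFDerivAt.comp_hasDerivAt t hexp

lemma aux_exp_cancel (A : Matrix (Fin d) (Fin d) ℝ) (t : ℝ) :
    NormedSpace.exp (t • A) * NormedSpace.exp ((-t) • A) = 1 := by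
  rw [← Matrix.exp_add_of_commute (t • A) ((-t) • A)
      (((Commute.refl A).smul_left t).smul_right (-t))]
  rw [show t • A + (-t) • A = 0 by rw [← add_smul]; simp]
  exact NormedSpace.exp_zero

lemma aux_sum_mul_eq_trace (X Y : Matrix (Fin d) (Fin d) ℝ) :
    ∑ i, ∑ j, X i j * Y i j = Matrix.trace (X * Yᵀ) := by
  simp [Matrix.trace, Matrix.mul_apply, Matrix.diag]

end Aux

/-- change of variables `v(t,y) = u(t, e^{tA}y)` kills the drift.
For `u` of class `C²` and `v(t,y) = u(t, e^{tA}y)`,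
`∂ₜu(t,e^{tA}y) + Tr(c(t) D²ₓu(t,e^{tA}y)) + ⟨A e^{tA}y, Dₓu(t,e^{tA}y)⟩
  = ∂ₜv(t,y) + Tr(e^{-tA} c(t) e^{-tA^*} D²_y v(t,y))`. -/
theorem change_of_variables_identity
    (d : ℕ) (hd : 1 ≤ d)
    (c : ℝ → Matrix (Fin d) (Fin d) ℝ)
    (hsymm : ∀ t, (c t).IsSymm)
    (A : Matrix (Fin d) (Fin d) ℝ)
    (u : ℝ × (Fin d → ℝ) → ℝ) (hu : ContDiff ℝ 2 u)
    (v : ℝ × (Fin d → ℝ) → ℝ)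
    (hv : ∀ z : ℝ × (Fin d → ℝ), v z = u (z.1, (NormedSpace.exp (z.1 • A)).mulVec z.2))
    (t : ℝ) (y : Fin d → ℝ) :
    ptime u (t, (NormedSpace.exp (t • A)).mulVec y)
        + (∑ i, ∑ j, c t i j * pspace2 i j u (t, (NormedSpace.exp (t • A)).mulVec y))
        + ∑ i, A.mulVec ((NormedSpace.exp (t • A)).mulVec y) i
            * pspace i u (t, (NormedSpace.exp (t • A)).mulVec y)
      = ptime v (t, y)
        + ∑ i, ∑ j,
            (NormedSpace.exp ((-t) • A) * c t * NormedSpace.exp ((-t) • Aᵀ)) i j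
              * pspace2 i j v (t, y) := by
  set M : Matrix (Fin d) (Fin d) ℝ := NormedSpace.exp (t • A) with hM
  set N : Matrix (Fin d) (Fin d) ℝ :=
    NormedSpace.exp ((-t) • A) * c t * NormedSpace.exp ((-t) • Aᵀ) with hN
  set z : ℝ × (Fin d → ℝ) := (t, M.mulVec y) with hz
  have hud : Differentiable ℝ u := hu.differentiable two_ne_zero
  -- `u(t, ·)` is C².
  have hUt : ContDiff ℝ 2 (fun x : Fin d → ℝ => u (t, x)) :=
    hu.comp (contDiff_const.prodMk contDiff_id)
  -- the partials `g k = pspace k u (t, ·)` are C¹.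
  have hg : ∀ k : Fin d, ContDiff ℝ 1 (fun x : Fin d → ℝ => pspace k u (t, x)) := by
    intro k
    exact (hUt.fderiv_right (by norm_num)).clm_apply contDiff_const
  -- Step 1: the time derivative of v.
  have hpv : ptime v (t, y)
      = ptime u z + ∑ i, A.mulVec (M.mulVec y) i * pspace i u z := by
    have hfun : (fun s : ℝ => v (s, y))
        = fun s : ℝ => u (s, (NormedSpace.exp (s • A)).mulVec y) :=
      funext fun s => hv (s, y)
    have hφ : HasDerivAt
        (fun s : ℝ => ((s, (NormedSpace.exp (s • A)).mulVec y) : ℝ × (Fin d → ℝ)))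
        ((1 : ℝ), (A * M).mulVec y) t :=
      (hasDerivAt_id t).prodMk (aux_exp_mulVec_hasDerivAt A y t)
    have hcomp : HasDerivAt (fun s : ℝ => u (s, (NormedSpace.exp (s • A)).mulVec y))
        (fderiv ℝ u z ((1 : ℝ), (A * M).mulVec y)) t :=
      (hud z).hasFDerivAt.comp_hasDerivAt t hφ
    have h1 : ptime v (t, y) = fderiv ℝ u z ((1 : ℝ), (A * M).mulVec y) := by
      show deriv (fun s : ℝ => v (s, y)) t = _
      rw [hfun]
      exact hcomp.deriv
    rw [h1, show (((1 : ℝ), (A * M).mulVec y) : ℝ × (Fin d → ℝ))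
        = ((1 : ℝ), (0 : Fin d → ℝ)) + ((0 : ℝ), (A * M).mulVec y) by simp,
      map_add, ← aux_ptime_eq u z (hud z), aux_fderiv_snd u z (hud z)]
    congr 1
    refine Finset.sum_congr rfl fun i _ => ?_
    rw [Matrix.mulVec_mulVec]
  -- Step 2: first spatial derivatives of v (at time t, any point x).
  have hps : ∀ (j : Fin d) (x : Fin d → ℝ),
      pspace j v (t, x) = ∑ k, M k j * pspace k u (t, M.mulVec x) := by
    intro j x
    have hfun : (fun x' : Fin d → ℝ => v (t, x'))
        = fun x' : Fin d → ℝ => u (t, M.mulVec x') :=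
      funext fun x' => hv (t, x')
    show fderiv ℝ (fun x' : Fin d → ℝ => v (t, x')) x (Pi.single j 1) = _
    rw [hfun, aux_spatial_fderiv _ M x (hUt.differentiable two_ne_zero _),
      aux_clm_apply_sum (fderiv ℝ (fun x' : Fin d → ℝ => u (t, x')) (M.mulVec x))
        (M.mulVec (Pi.single j 1))]
    refine Finset.sum_congr rfl fun k _ => ?_
    rw [Matrix.mulVec_single_one]
    rfl
  -- Step 3: second spatial derivatives of v, as entries of `Mᵀ * P * M`.
  set P : Matrix (Fin d) (Fin d) ℝ := Matrix.of fun l k => pspace2 l k u z with hP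
  have hps2 : ∀ i j : Fin d, pspace2 i j v (t, y) = (Mᵀ * P * M) i j := by
    intro i j
    have hfun : (fun x : Fin d → ℝ => pspace j v (t, x))
        = fun x : Fin d → ℝ => ∑ k, M k j * pspace k u (t, M.mulVec x) :=
      funext fun x => hps j x
    have hterm : ∀ k : Fin d, HasFDerivAt
        (fun x : Fin d → ℝ => M k j * pspace k u (t, M.mulVec x))
        (M k j • ((fderiv ℝ (fun x' : Fin d → ℝ => pspace k u (t, x'))
          (M.mulVec y)).comp (mulVecCLM M))) y := by
      intro k
      exact ((((hg k).differentiable one_ne_zero (M.mulVec y)).hasFDerivAt.comp y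
        (mulVecCLM M).hasFDerivAt).const_mul (M k j))
    have hsum := HasFDerivAt.fun_sum (u := Finset.univ) fun k _ => hterm k
    have h1 : pspace2 i j v (t, y)
        = (∑ k, M k j • ((fderiv ℝ (fun x' : Fin d → ℝ => pspace k u (t, x'))
          (M.mulVec y)).comp (mulVecCLM M))) (Pi.single i 1) := by
      show fderiv ℝ (fun x : Fin d → ℝ => pspace j v (t, x)) y (Pi.single i 1) = _
      rw [hfun, hsum.fderiv]
    rw [h1]
    rw [ContinuousLinearMap.sum_apply]
    have h2 : ∀ k : Fin d,
        (M k j • ((fderiv ℝ (fun x' : Fin d → ℝ => pspace k u (t, x'))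
          (M.mulVec y)).comp (mulVecCLM M))) (Pi.single i 1)
        = M k j * ∑ l, M l i * pspace2 l k u z := by
      intro k
      rw [ContinuousLinearMap.smul_apply, ContinuousLinearMap.comp_apply, smul_eq_mul]
      congr 1
      rw [show mulVecCLM M (Pi.single i 1) = M.mulVec (Pi.single i 1) from rfl,
        Matrix.mulVec_single_one,
        aux_clm_apply_sum (fderiv ℝ (fun x' : Fin d → ℝ => pspace k u (t, x'))
          (M.mulVec y)) (M.col i)]
      rfl
    rw [Finset.sum_congr rfl fun k _ => h2 k]
    -- now pure matrix-entry algebra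
    rw [Matrix.mul_apply]
    rw [Finset.sum_congr rfl (fun k _ => by rw [Matrix.mul_apply, Finset.sum_mul] :
      ∀ k ∈ Finset.univ, (Mᵀ * P) i k * M k j = ∑ l, Mᵀ i l * P l k * M k j)]
    refine Finset.sum_congr rfl fun k _ => ?_
    rw [Finset.mul_sum]
    refine Finset.sum_congr rfl fun l _ => ?_
    simp only [Matrix.transpose_apply, hP, Matrix.of_apply]
    ring
  -- Step 4: the key matrix identity  M * N * Mᵀ = c t.
  have hMNM : M * N * Mᵀ = c t := by
    have h1 : M * NormedSpace.exp ((-t) • A) = 1 := aux_exp_cancel A t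
    have h2 : NormedSpace.exp ((-t) • Aᵀ) * Mᵀ = 1 := by
      have : Mᵀ = NormedSpace.exp (t • Aᵀ) := by
        rw [hM, ← Matrix.exp_transpose, Matrix.transpose_smul]
      rw [this]
      have := aux_exp_cancel Aᵀ (-t)
      rwa [neg_neg] at this
    calc M * N * Mᵀ
        = (M * NormedSpace.exp ((-t) • A)) * c t
            * (NormedSpace.exp ((-t) • Aᵀ) * Mᵀ) := by
          rw [hN]; noncomm_ring
      _ = c t := by rw [h1, h2, one_mul, mul_one]
  -- Step 5: put everything together.
  have hsum2 : ∑ i, ∑ j, N i j * pspace2 i j v (t, y)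
      = ∑ i, ∑ j, c t i j * pspace2 i j u z := by
    have h1 : ∑ i, ∑ j, N i j * pspace2 i j v (t, y)
        = ∑ i, ∑ j, N i j * (Mᵀ * P * M) i j := by
      refine Finset.sum_congr rfl fun i _ => Finset.sum_congr rfl fun j _ => ?_
      rw [hps2 i j]
    have h2 : ∑ i, ∑ j, c t i j * pspace2 i j u z
        = Matrix.trace (c t * Pᵀ) := aux_sum_mul_eq_trace (c t) P
    rw [h1, aux_sum_mul_eq_trace N (Mᵀ * P * M), h2]
    have h3 : (Mᵀ * P * M)ᵀ = Mᵀ * Pᵀ * M := by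
      rw [Matrix.transpose_mul, Matrix.transpose_mul, Matrix.transpose_transpose]
      noncomm_ring
    rw [h3, show N * (Mᵀ * Pᵀ * M) = (N * Mᵀ * Pᵀ) * M by noncomm_ring,
      Matrix.trace_mul_comm, show M * (N * Mᵀ * Pᵀ) = (M * N * Mᵀ) * Pᵀ by noncomm_ring,
      hMNM]
  rw [hpv, hsum2]
  ring
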